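/- Let n be a positive integer and let y₁, y₂, y₃, y₄ be pairwise distinct elements of ZMod n. Set z₁ := min(d(y₁,y₂), d(y₂,y₁)) and z₃ := min(d(y₃,y₄), d(y₄,y₃)). Suppose that either (d(y₃,y₁) ≤ d(y₃,y₄) and d(y₃,y₂) ≤ d(y₃,y₄)) or (d(y₄,y₁) ≤ d(y₄,y₃) and d(y₄,y₂) ≤ d(y₄,y₃)) (i.e., y₁ and y₂ both lie on one of the two arcs determined by y₃ and y₄). Then f(y₁,y₃) + f(y₁,y₄) + f(y₂,y₃) + f(y₂,y₄) ≥ 4·⌊n/2⌋·⌊(n−1)/2⌋ + z₁² + z₃² − Δ_n·Δ_{z₁+z₃}. -/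
import Mathlib


/-- `C2 x` is the binomial-type expression `x(x-1)/2`. -/
def C2 (x : ℤ) : ℤ := x * (x - 1) / 2

/-- `dz x y` is the least nonnegative residue of `y - x` modulo `n`. -/
def dz {n : ℕ} (x y : ZMod n) : ℕ := (y - x).val

/-- `fz x y = C(d(x,y),2) + C(n - d(x,y),2)` for `x y : ZMod n`. -/
def fz {n : ℕ} (x y : ZMod n) : ℤ := C2 (dz x y) + C2 ((n : ℤ) - dz x y)

/-- `Δ k = 1` if `k` is odd and `0` if `k` is even. -/
def Δ (k : ℕ) : ℤ := if Odd k then 1 else 0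

lemma two_C2 (x : ℤ) : 2 * C2 x = x * (x - 1) := by
  have h : (2:ℤ) ∣ x * (x - 1) := by
    rcases Int.even_or_odd x with ⟨k,hk⟩|⟨k,hk⟩
    · exact ⟨k*(x-1), by rw [hk]; ring⟩
    · exact ⟨x*k, by rw [hk]; ring⟩
  exact Int.mul_ediv_cancel' h

lemma core_ineq (n t a b z₁ z₃ δ Dn : ℤ) (ha : 1 ≤ a) (hab : a < b)
    (hbt : b < t) (ht : t ≤ n - 1)
    (hz₁ : z₁ = min (b - a) (n - (b - a))) (hz₃ : z₃ = min t (n - t))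
    (hδ0 : 0 ≤ δ) (hδ1 : Odd n → Odd (z₁ + z₃) → 1 ≤ δ)
    (hΔe : Even n → Dn = 0) (hΔ1 : Dn ≤ 1) :
    Dn + z₁ ^ 2 + z₃ ^ 2 - δ ≤ (b - a) ^ 2 + (a + b - t) ^ 2 + (n - t) ^ 2 := by
  have hz₁0 : 0 ≤ z₁ := by rw [hz₁]; simp [le_min_iff]; omega
  have hz₁le : z₁ ≤ b - a := by rw [hz₁]; exact min_le_left _ _
  have hz₃0 : 0 ≤ z₃ := by rw [hz₃]; simp [le_min_iff]; omega
  have hz₃le : z₃ ≤ n - t := by rw [hz₃]; exact min_le_right _ _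
  have hs1 : z₁ ^ 2 ≤ (b - a) ^ 2 := by nlinarith
  have hs3 : z₃ ^ 2 ≤ (n - t) ^ 2 := by nlinarith
  rcases Int.even_or_odd n with he | ho
  · have := hΔe he
    nlinarith [sq_nonneg (a + b - t)]
  · rcases Int.even_or_odd (z₁ + z₃) with hze | hzo
    swap
    · have := hδ1 ho hzo
      nlinarith [sq_nonneg (a + b - t)]
    · have h1 : 1 ≤ ((b - a) ^ 2 - z₁ ^ 2) + (a + b - t) ^ 2 + ((n - t) ^ 2 - z₃ ^ 2) := by
        rcases le_or_gt (b - a) (n - (b - a)) with h | h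
        · rcases le_or_gt (n - t) t with h' | h'
          · have e1 : z₁ = b - a := by rw [hz₁]; exact min_eq_left h
            have e3 : z₃ = n - t := by rw [hz₃]; exact min_eq_right h'
            have hw : a + b - t ≠ 0 := by
              intro hw0
              rcases ho with ⟨k, hk⟩
              rcases hze with ⟨j, hj⟩
              omega
            have : 1 ≤ (a + b - t) ^ 2 := by
              rcases lt_or_gt_of_ne hw with h'' | h'' <;> nlinarith
            nlinarith
          · have e3 : z₃ = t := by rw [hz₃]; exact min_eq_left (by omega)
            have : n - 2 * t ≥ 1 := by omega
            nlinarith [sq_nonneg (a + b - t)]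
        · have e1 : z₁ = n - (b - a) := by rw [hz₁]; exact min_eq_right (by omega)
          have : 2 * (b - a) - n ≥ 1 := by omega
          nlinarith [sq_nonneg (a + b - t)]
      nlinarith

section dzlem
variable {n : ℕ} [NeZero n]

lemma dz_lt (x y : ZMod n) : dz x y < n := ZMod.val_lt _

lemma dz_pos {x y : ZMod n} (h : x ≠ y) : 0 < dz x y := by
  have h0 : y - x ≠ 0 := sub_ne_zero.mpr (Ne.symm h)
  have := (ZMod.val_eq_zero (y - x)).not.mpr h0
  unfold dz
  omega

lemma dz_rev {x y : ZMod n} (h : x ≠ y) : dz y x = n - dz x y := by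
  have h0 : y - x ≠ 0 := sub_ne_zero.mpr (Ne.symm h)
  haveI : NeZero (y - x) := ⟨h0⟩
  have : x - y = -(y - x) := by ring
  unfold dz
  rw [this, ZMod.val_neg_of_ne_zero]

lemma dz_sub {c x y : ZMod n} (h : dz c x ≤ dz c y) : dz x y = dz c y - dz c x := by
  unfold dz at *
  have : y - x = (y - c) - (x - c) := by ring
  rw [this, ZMod.val_sub h]

lemma dz_inj {c x y : ZMod n} (h : dz c x = dz c y) : x = y := by
  have h2 : x - c = y - c := ZMod.val_injective n h
  have := congrArg (· + c) h2
  simpa using this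

end dzlem

lemma M_eq (n : ℕ) (hn : 0 < n) :
    4 * (((n / 2 : ℕ) : ℤ) * (((n - 1) / 2 : ℕ) : ℤ)) = ((n:ℤ) - 1)^2 - 1 + Δ n := by
  rcases Nat.even_or_odd n with ⟨m, hm⟩ | ⟨m, hm⟩
  · have hm1 : 1 ≤ m := by omega
    have h1 : n / 2 = m := by omega
    have h2 : (n - 1) / 2 = m - 1 := by omega
    have h3 : ¬ Odd n := by rw [Nat.odd_iff]; omega
    rw [h1, h2]
    simp only [Δ, h3, if_false]
    rw [Nat.cast_sub hm1]
    subst hm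
    push_cast
    ring
  · have h1 : n / 2 = m := by omega
    have h2 : (n - 1) / 2 = m := by omega
    have h3 : Odd n := by rw [Nat.odd_iff]; omega
    rw [h1, h2]
    simp only [Δ, h3, if_true]
    subst hm
    push_cast
    ring

lemma aux_main (n : ℕ) (hn : 0 < n) (y₁ y₂ y₃ y₄ : ZMod n)
    (h12 : y₁ ≠ y₂) (h13 : y₁ ≠ y₃) (h14 : y₁ ≠ y₄)
    (h23 : y₂ ≠ y₃) (h24 : y₂ ≠ y₄) (h34 : y₃ ≠ y₄)
    (z₁ z₃ : ℕ) (hz₁ : z₁ = min (dz y₁ y₂) (dz y₂ y₁))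
    (hz₃ : z₃ = min (dz y₃ y₄) (dz y₄ y₃))
    (h1 : dz y₃ y₁ ≤ dz y₃ y₄) (h2 : dz y₃ y₂ ≤ dz y₃ y₄)
    (hab : dz y₃ y₁ < dz y₃ y₂) :
    4 * (((n / 2 : ℕ) : ℤ) * (((n - 1) / 2 : ℕ) : ℤ)) + (z₁ : ℤ) ^ 2 + (z₃ : ℤ) ^ 2
        - Δ n * Δ (z₁ + z₃) ≤
      fz y₁ y₃ + fz y₁ y₄ + fz y₂ y₃ + fz y₂ y₄ := by
  haveI : NeZero n := ⟨hn.ne'⟩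
  set a := dz y₃ y₁ with ha_def
  set b := dz y₃ y₂ with hb_def
  set t := dz y₃ y₄ with ht_def
  have hbt : b < t := lt_of_le_of_ne h2 (fun h => h24 (dz_inj h))
  have ha1 : 1 ≤ a := dz_pos (Ne.symm h13)
  have htn : t < n := dz_lt _ _
  have e13 : dz y₁ y₃ = n - a := dz_rev (Ne.symm h13)
  have e14 : dz y₁ y₄ = t - a := dz_sub h1
  have e23 : dz y₂ y₃ = n - b := dz_rev (Ne.symm h23)
  have e24 : dz y₂ y₄ = t - b := dz_sub h2
  have e12 : dz y₁ y₂ = b - a := dz_sub (le_of_lt hab)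
  have e21 : dz y₂ y₁ = n - (b - a) := by rw [dz_rev h12, e12]
  have e43 : dz y₄ y₃ = n - t := dz_rev h34
  have han : a ≤ n := by omega
  have hbn : b ≤ n := by omega
  have hat : a ≤ t := by omega
  have hbtle : b ≤ t := by omega
  have hban : b - a ≤ n := by omega
  have hfz13 : fz y₁ y₃ = C2 ((n:ℤ) - a) + C2 ((n:ℤ) - ((n:ℤ) - a)) := by
    unfold fz; rw [e13, Nat.cast_sub han]
  have hfz14 : fz y₁ y₄ = C2 ((t:ℤ) - a) + C2 ((n:ℤ) - ((t:ℤ) - a)) := by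
    unfold fz; rw [e14, Nat.cast_sub hat]
  have hfz23 : fz y₂ y₃ = C2 ((n:ℤ) - b) + C2 ((n:ℤ) - ((n:ℤ) - b)) := by
    unfold fz; rw [e23, Nat.cast_sub hbn]
  have hfz24 : fz y₂ y₄ = C2 ((t:ℤ) - b) + C2 ((n:ℤ) - ((t:ℤ) - b)) := by
    unfold fz; rw [e24, Nat.cast_sub hbtle]
  have hz₁' : (z₁ : ℤ) = min ((b:ℤ) - a) ((n:ℤ) - ((b:ℤ) - a)) := by
    rw [hz₁, e12, e21, Nat.cast_min, Nat.cast_sub hban, Nat.cast_sub (le_of_lt hab)]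
  have hz₃' : (z₃ : ℤ) = min (t:ℤ) ((n:ℤ) - t) := by
    rw [hz₃, e43, Nat.cast_min, Nat.cast_sub htn.le]
  have hδ0 : 0 ≤ Δ n * Δ (z₁ + z₃) := by
    unfold Δ; split <;> split <;> norm_num
  have hδ1 : Odd (n:ℤ) → Odd ((z₁:ℤ) + (z₃:ℤ)) → 1 ≤ Δ n * Δ (z₁ + z₃) := by
    intro hon hoz
    rw [Int.odd_coe_nat] at hon
    have hoz' : Odd (z₁ + z₃) := by
      rw [← Int.odd_coe_nat]; push_cast; exact hoz
    simp [Δ, hon, hoz']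
  have hΔe : Even (n:ℤ) → Δ n = 0 := by
    intro h; rw [Int.even_coe_nat] at h
    simp [Δ, Nat.not_odd_iff_even.mpr h]
  have hΔ1 : Δ n ≤ 1 := by unfold Δ; split <;> norm_num
  have hcore := core_ineq (n:ℤ) (t:ℤ) (a:ℤ) (b:ℤ) (z₁:ℤ) (z₃:ℤ)
    (Δ n * Δ (z₁ + z₃)) (Δ n)
    (by exact_mod_cast ha1) (by exact_mod_cast hab) (by exact_mod_cast hbt)
    (Int.le_sub_one_iff.mpr (by exact_mod_cast htn))
    hz₁' hz₃' hδ0 hδ1 hΔe hΔ1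
  have hM := M_eq n hn
  have hFeq : 2 * (fz y₁ y₃ + fz y₁ y₄ + fz y₂ y₃ + fz y₂ y₄) =
      2 * (((b:ℤ) - a)^2 + ((a:ℤ) + b - t)^2 + ((n:ℤ) - t)^2 + ((n:ℤ) - 1)^2 - 1) := by
    rw [hfz13, hfz14, hfz23, hfz24]
    linear_combination two_C2 ((n:ℤ) - a) + two_C2 ((n:ℤ) - ((n:ℤ) - a)) +
      two_C2 ((t:ℤ) - a) + two_C2 ((n:ℤ) - ((t:ℤ) - a)) +
      two_C2 ((n:ℤ) - b) + two_C2 ((n:ℤ) - ((n:ℤ) - b)) +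
      two_C2 ((t:ℤ) - b) + two_C2 ((n:ℤ) - ((t:ℤ) - b))
  linarith [hcore, hM, hFeq]

theorem stmt_10 (n : ℕ) (hn : 0 < n) (y₁ y₂ y₃ y₄ : ZMod n)
    (h12 : y₁ ≠ y₂) (h13 : y₁ ≠ y₃) (h14 : y₁ ≠ y₄)
    (h23 : y₂ ≠ y₃) (h24 : y₂ ≠ y₄) (h34 : y₃ ≠ y₄)
    (z₁ z₃ : ℕ) (hz₁ : z₁ = min (dz y₁ y₂) (dz y₂ y₁))
    (hz₃ : z₃ = min (dz y₃ y₄) (dz y₄ y₃))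
    (harc : (dz y₃ y₁ ≤ dz y₃ y₄ ∧ dz y₃ y₂ ≤ dz y₃ y₄) ∨
            (dz y₄ y₁ ≤ dz y₄ y₃ ∧ dz y₄ y₂ ≤ dz y₄ y₃)) :
    4 * (((n / 2 : ℕ) : ℤ) * (((n - 1) / 2 : ℕ) : ℤ)) + (z₁ : ℤ) ^ 2 + (z₃ : ℤ) ^ 2
        - Δ n * Δ (z₁ + z₃) ≤
      fz y₁ y₃ + fz y₁ y₄ + fz y₂ y₃ + fz y₂ y₄ := by
  haveI : NeZero n := ⟨hn.ne'⟩
  rcases harc with ⟨h1, h2⟩ | ⟨h1, h2⟩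
  · rcases lt_trichotomy (dz y₃ y₁) (dz y₃ y₂) with hlt | heq | hgt
    · exact aux_main n hn y₁ y₂ y₃ y₄ h12 h13 h14 h23 h24 h34 z₁ z₃ hz₁ hz₃ h1 h2 hlt
    · exact absurd (dz_inj heq) h12
    · have := aux_main n hn y₂ y₁ y₃ y₄ (Ne.symm h12) h23 h24 h13 h14 h34 z₁ z₃
        (by rw [hz₁, min_comm]) hz₃ h2 h1 hgt
      linarith
  · rcases lt_trichotomy (dz y₄ y₁) (dz y₄ y₂) with hlt | heq | hgt
    · have := aux_main n hn y₁ y₂ y₄ y₃ h12 h14 h13 h24 h23 (Ne.symm h34) z₁ z₃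
        hz₁ (by rw [hz₃, min_comm]) h1 h2 hlt
      linarith
    · exact absurd (dz_inj heq) h12
    · have := aux_main n hn y₂ y₁ y₄ y₃ (Ne.symm h12) h24 h23 h14 h13 (Ne.symm h34) z₁ z₃
        (by rw [hz₁, min_comm]) (by rw [hz₃, min_comm]) h2 h1 hgt
      linarith
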